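/- Let g(y) = 𝔞·(1 − e^{−βy}) on ℕ with 𝔞, β > 0 and p = 1. Let m: ℤ → ℕ be finitely supported and σ: ℤ → ℝ satisfy σ_{i−1} − σ_i = −β·m_i for all i ∈ ℤ, with σ_i < ln 𝔞 for all i. Then for every bounded cylinder function φ: ∫Lφ dν^{σ,m} = Σ_{i∈ℤ} (1 − e^{−β m_i})·(𝔞 − e^{σ_i})·[∫φ dν^{σ^{(i)}, m^{i,i+1}} − ∫φ dν^{σ,m}], where m^{i,i+1} denotes m with m_i decreased by 1 and m_{i+1} increased by 1, and σ^{(i)} agrees with σ except that σ^{(i)}_i = σ_i − β. (The sum is effectively finite since terms with m_i = 0 vanish.) -/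

import Mathlib

open MeasureTheory Real

noncomputable def gfact (g : ℕ → ℝ) (z : ℕ) : ℝ := ∏ y ∈ Finset.Icc 1 z, g y

noncomputable def ZN (g : ℕ → ℝ) (θ : ℝ) : ℝ := ∑' z : ℕ, exp (θ * z) / gfact g z

noncomputable def muN (g : ℕ → ℝ) (θ : ℝ) (z : ℕ) : ℝ := exp (θ * z) / (gfact g z * ZN g θ)

abbrev ConfN : Type := ℤ → ℕ

/-- The configuration with one particle moved from site `i` to site `j`. -/
def moveN (η : ConfN) (i j : ℤ) : ConfN :=
  fun k => if k = i then η k - 1 else if k = j then η k + 1 else η k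

/-- The coupled zero range generator with right-jump probability `p` and rate function `g`,
acting on functions of the coupled pair of configurations. -/
noncomputable def LN (p : ℝ) (g : ℕ → ℝ) (φ : ConfN × ConfN → ℝ) (x : ConfN × ConfN) : ℝ :=
  ∑' i : ℤ,
    (p * g (x.1 i) * (φ (moveN x.1 i (i + 1), moveN x.2 i (i + 1)) - φ x)
      + p * (g (x.2 i) - g (x.1 i)) * (φ (x.1, moveN x.2 i (i + 1)) - φ x)
      + (1 - p) * g (x.1 i) * (φ (moveN x.1 i (i - 1), moveN x.2 i (i - 1)) - φ x)
      + (1 - p) * (g (x.2 i) - g (x.1 i)) * (φ (x.1, moveN x.2 i (i - 1)) - φ x))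

/-- A bounded cylinder function: bounded and depending on finitely many coordinates. -/
def IsBddCylinder (φ : ConfN × ConfN → ℝ) : Prop :=
  (∃ s : Finset ℤ, ∀ x y : ConfN × ConfN,
      (∀ i ∈ s, x.1 i = y.1 i ∧ x.2 i = y.2 i) → φ x = φ y)
    ∧ ∃ C : ℝ, ∀ x, |φ x| ≤ C

/-- The discrete measure on ℕ × ℕ with mass function `f`. -/
noncomputable def siteMeasure (f : ℕ × ℕ → ℝ) : Measure (ℕ × ℕ) :=
  Measure.count.withDensity fun yz => ENNReal.ofReal (f yz)

/-- `ν` is the product measure on `(ℕ × ℕ)^ℤ` with the given site marginals: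
every cylinder event has product probability. -/
def IsProductMeasure (fac : ℤ → Measure (ℕ × ℕ)) (ν : Measure (ConfN × ConfN)) : Prop :=
  ∀ (s : Finset ℤ) (B : ℤ → Set (ℕ × ℕ)),
    ν {x : ConfN × ConfN | ∀ i ∈ s, (x.1 i, x.2 i) ∈ B i} = ∏ i ∈ s, fac i (B i)

/-- The site marginals of the multi-shock measure `ν^{σ,m}`: at site `i`, the image of
`μ^{σ_i}` under `y ↦ (y, y + m_i)`. -/
noncomputable def multiFactor (g : ℕ → ℝ) (σ : ℤ → ℝ) (m : ℤ → ℕ) (i : ℤ) :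
    Measure (ℕ × ℕ) :=
  siteMeasure fun yz => if yz.2 = yz.1 + m i then muN g (σ i) yz.1 else 0


namespace RWS

variable {𝔞 β : ℝ} {g : ℕ → ℝ}

section A
variable (h𝔞 : 0 < 𝔞) (hβ : 0 < β) (hg : ∀ y : ℕ, g y = 𝔞 * (1 - exp (-β * y)))
include h𝔞 hβ hg

lemma q_pos : 0 < exp (-β) := exp_pos _
lemma q_lt_one : exp (-β) < 1 := exp_lt_one_iff.mpr (by linarith)

lemma g_eq (y : ℕ) : g y = 𝔞 * (1 - exp (-β) ^ y) := by
  rw [hg y, mul_comm (-β) (y:ℝ), Real.exp_nat_mul]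

lemma g_zero : g 0 = 0 := by simp [g_eq h𝔞 hβ hg]

lemma g_nonneg (y : ℕ) : 0 ≤ g y := by
  rw [g_eq h𝔞 hβ hg]
  have h1 : exp (-β) ^ y ≤ 1 :=
    pow_le_one₀ (le_of_lt (q_pos h𝔞 hβ hg)) (le_of_lt (q_lt_one h𝔞 hβ hg))
  nlinarith

lemma g_le (y : ℕ) : g y ≤ 𝔞 := by
  rw [g_eq h𝔞 hβ hg]
  have h1 : 0 ≤ exp (-β) ^ y := pow_nonneg (le_of_lt (q_pos h𝔞 hβ hg)) _
  nlinarith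

lemma g_pos (y : ℕ) (hy : y ≠ 0) : 0 < g y := by
  rw [g_eq h𝔞 hβ hg]
  have h1 : exp (-β) ^ y < 1 :=
    pow_lt_one₀ (le_of_lt (q_pos h𝔞 hβ hg)) (q_lt_one h𝔞 hβ hg) hy
  nlinarith

lemma gfact_pos (z : ℕ) : 0 < gfact g z :=
  Finset.prod_pos fun i hi => g_pos h𝔞 hβ hg i (by simp at hi; omega)

lemma g_add (y k : ℕ) : g (y + k) = 𝔞 * (1 - exp (-β) ^ k) + exp (-β) ^ k * g y := by
  rw [g_eq h𝔞 hβ hg, g_eq h𝔞 hβ hg, pow_add]; ring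

end A

lemma gfact_succ (g : ℕ → ℝ) (z : ℕ) : gfact g (z + 1) = gfact g z * g (z + 1) :=
  Finset.prod_Icc_succ_top (by omega) _

section B
variable (h𝔞 : 0 < 𝔞) (hβ : 0 < β) (hg : ∀ y : ℕ, g y = 𝔞 * (1 - exp (-β * y)))
  {θ : ℝ} (hθ : exp θ < 𝔞)
include h𝔞 hβ hg hθ

lemma summable_t : Summable (fun z : ℕ => exp (θ * z) / gfact g z) := by
  set c := (exp θ + 𝔞) / 2 with hc
  have hc0 : 0 < c := by have := exp_pos θ; positivity
  have hc1 : exp θ < c := by simp [hc]; linarith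
  have hc2 : c < 𝔞 := by simp [hc]; linarith
  apply summable_of_ratio_norm_eventually_le (r := exp θ / c)
  · rw [div_lt_one hc0]; exact hc1
  · have hq0 := q_pos h𝔞 hβ hg
    have hq1 := q_lt_one h𝔞 hβ hg
    have htend : Filter.Tendsto (fun n : ℕ => exp (-β) ^ (n + 1)) Filter.atTop (nhds 0) := by
      exact (tendsto_pow_atTop_nhds_zero_of_lt_one (le_of_lt hq0) hq1).comp
        (Filter.tendsto_add_atTop_nat 1)
    have hev : ∀ᶠ n : ℕ in Filter.atTop, exp (-β) ^ (n + 1) < 1 - c / 𝔞 := by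
      apply htend.eventually_lt_const
      have : c / 𝔞 < 1 := (div_lt_one h𝔞).mpr hc2
      linarith
    filter_upwards [hev] with n hn
    have hgc : c ≤ g (n + 1) := by
      rw [g_eq h𝔞 hβ hg]
      have h' : c / 𝔞 < 1 - exp (-β) ^ (n + 1) := by linarith
      have h'' := (div_lt_iff₀ h𝔞).mp h'
      nlinarith
    have hgpos : 0 < g (n + 1) := lt_of_lt_of_le hc0 hgc
    have hfa : 0 < gfact g n := gfact_pos h𝔞 hβ hg n
    have hval : exp (θ * (↑(n+1) : ℕ)) / gfact g (n + 1)
        = (exp θ / g (n + 1)) * (exp (θ * n) / gfact g n) := by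
      rw [gfact_succ]
      push_cast
      rw [show θ * ((n : ℝ) + 1) = θ + θ * n by ring, exp_add]
      field_simp
    rw [hval, norm_mul]
    have h1 : ‖exp θ / g (n + 1)‖ ≤ exp θ / c := by
      rw [Real.norm_of_nonneg (by positivity)]
      exact div_le_div_of_nonneg_left (le_of_lt (exp_pos θ)) hc0 hgc
    have h2 : (0:ℝ) ≤ ‖exp (θ * n) / gfact g n‖ := norm_nonneg _
    calc ‖exp θ / g (n+1)‖ * ‖exp (θ * n) / gfact g n‖
        ≤ (exp θ / c) * ‖exp (θ * n) / gfact g n‖ := by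
          exact mul_le_mul_of_nonneg_right h1 h2
      _ = exp θ / c * ‖exp (θ * n) / gfact g n‖ := rfl

lemma ZN_pos : 0 < ZN g θ := by
  have hs := summable_t h𝔞 hβ hg hθ
  have h0 : (0:ℝ) < exp (θ * (0:ℕ)) / gfact g 0 := by
    norm_num [gfact]
  exact Summable.tsum_pos hs (fun z => div_nonneg (le_of_lt (exp_pos _))
    (le_of_lt (gfact_pos h𝔞 hβ hg z))) 0 h0

lemma muN_nonneg (z : ℕ) : 0 ≤ muN g θ z := by
  unfold muN
  have := gfact_pos h𝔞 hβ hg z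
  have := ZN_pos h𝔞 hβ hg hθ
  positivity

lemma muN_sum : ∑' z : ℕ, muN g θ z = 1 := by
  have hZ := ZN_pos h𝔞 hβ hg hθ
  have : ∀ z : ℕ, muN g θ z = (exp (θ * z) / gfact g z) / ZN g θ := by
    intro z; unfold muN; rw [div_div]
  simp_rw [this]
  rw [tsum_div_const]
  exact div_self (ne_of_gt hZ)

lemma summable_muN : Summable (muN g θ) := by
  have h : muN g θ = fun z : ℕ => (exp (θ * z) / gfact g z) / ZN g θ := by
    funext z; unfold muN; rw [div_div]
  rw [h]
  exact (summable_t h𝔞 hβ hg hθ).div_const _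

lemma muN_succ (z : ℕ) : g (z + 1) * muN g θ (z + 1) = exp θ * muN g θ z := by
  have hZ := ZN_pos h𝔞 hβ hg hθ
  have hgp := g_pos h𝔞 hβ hg (z + 1) (by omega)
  have hfp := gfact_pos h𝔞 hβ hg z
  unfold muN
  rw [gfact_succ]
  have : exp (θ * (↑(z + 1) : ℕ)) = exp θ * exp (θ * z) := by
    push_cast; rw [← exp_add]; ring_nf
  rw [this]
  field_simp

end B

section C
variable (h𝔞 : 0 < 𝔞) (hβ : 0 < β) (hg : ∀ y : ℕ, g y = 𝔞 * (1 - exp (-β * y)))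
  {θ : ℝ} (hθ : exp θ < 𝔞)
include h𝔞 hβ hg hθ

lemma ZN_funeq : ZN g (θ - β) = (1 - exp θ / 𝔞) * ZN g θ := by
  have hθ' : exp (θ - β) < 𝔞 := lt_trans (by
    apply exp_lt_exp.mpr; linarith) hθ
  have hs := summable_t h𝔞 hβ hg hθ
  have hs' := summable_t h𝔞 hβ hg hθ'
  have hdiff : ∀ z : ℕ, exp (θ * z) / gfact g z - exp ((θ - β) * z) / gfact g z
      = exp (θ * z) * g z / (𝔞 * gfact g z) := by
    intro z
    have hfp := gfact_pos h𝔞 hβ hg z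
    rw [g_eq h𝔞 hβ hg, show (θ - β) * (z:ℕ) = θ * z + (-β) * z by ring, exp_add,
      mul_comm (-β) ((z:ℕ):ℝ), Real.exp_nat_mul]
    field_simp
  have hsum_u : Summable (fun z : ℕ => exp (θ * z) * g z / (𝔞 * gfact g z)) := by
    have := hs.sub hs'
    simpa [hdiff] using this
  have key : (∑' z : ℕ, exp (θ * z) * g z / (𝔞 * gfact g z)) = (exp θ / 𝔞) * ZN g θ := by
    rw [Summable.tsum_eq_zero_add hsum_u]
    have h0 : exp (θ * (0:ℕ)) * g 0 / (𝔞 * gfact g 0) = 0 := by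
      simp [g_zero h𝔞 hβ hg]
    rw [h0, zero_add]
    have : ∀ z : ℕ, exp (θ * (↑(z+1):ℕ)) * g (z+1) / (𝔞 * gfact g (z+1))
        = (exp θ / 𝔞) * (exp (θ * z) / gfact g z) := by
      intro z
      have hfp := gfact_pos h𝔞 hβ hg z
      have hgp := g_pos h𝔞 hβ hg (z+1) (by omega)
      rw [gfact_succ]
      push_cast
      rw [show θ * ((z:ℝ) + 1) = θ + θ * z by ring, exp_add]
      field_simp
    simp_rw [this]
    rw [tsum_mul_left]
    rfl
  have hZZ : ZN g θ - ZN g (θ - β) = (exp θ / 𝔞) * ZN g θ := by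
    unfold ZN
    rw [← Summable.tsum_sub hs hs']
    simp_rw [hdiff]
    exact key
  linarith [hZZ]

lemma muN_tilt (z : ℕ) :
    (𝔞 - exp θ) * muN g (θ - β) z = 𝔞 * exp (-β) ^ z * muN g θ z := by
  have hZ := ZN_pos h𝔞 hβ hg hθ
  have hfp := gfact_pos h𝔞 hβ hg z
  have hne : 𝔞 - exp θ ≠ 0 := ne_of_gt (by linarith)
  unfold muN
  rw [ZN_funeq h𝔞 hβ hg hθ,
    show (θ - β) * (z:ℕ) = θ * z + (-β) * z by ring, exp_add,
    mul_comm (-β) ((z:ℕ):ℝ), Real.exp_nat_mul]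
  have h1a : (1 - exp θ / 𝔞) = (𝔞 - exp θ) / 𝔞 := by field_simp
  rw [h1a]
  field_simp

end C

section PartB

/-- Shift change of variables in a tsum over `ι → ℕ` at one coordinate. -/
lemma tsum_update_shift {ι : Type*} [Countable ι] [DecidableEq ι] (F : (ι → ℕ) → ℝ) (i : ι)
    (h0 : ∀ y, y i = 0 → F y = 0) :
    ∑' y : ι → ℕ, F y = ∑' y : ι → ℕ, F (Function.update y i (y i + 1)) := by
  symm
  apply Function.Injective.tsum_eq
    (g := fun y : ι → ℕ => Function.update y i (y i + 1))
  · intro a b hab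
    funext j
    by_cases hj : j = i
    · subst hj
      have := congrFun hab j
      simpa using this
    · have := congrFun hab j
      simpa [Function.update_of_ne hj] using this
  · intro x hx
    have hxi : x i ≠ 0 := fun h => hx (h0 x h)
    refine ⟨Function.update x i (x i - 1), ?_⟩
    funext j
    by_cases hj : j = i
    · subst hj; simp only [Function.update_self]; omega
    · simp [Function.update_of_ne hj]

end PartB

section Measures

def embC (T : Finset ℤ) (y : {j // j ∈ T} → ℕ) : ConfN :=
  fun j => if h : j ∈ T then y ⟨j, h⟩ else 0

def pairC (m : ℤ → ℕ) (T : Finset ℤ) (y : {j // j ∈ T} → ℕ) : ConfN × ConfN :=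
  (embC T y, fun j => embC T y j + m j)

noncomputable def weight (g : ℕ → ℝ) (σ : ℤ → ℝ) (T : Finset ℤ)
    (y : {j // j ∈ T} → ℕ) : ℝ :=
  ∏ j ∈ T.attach, muN g (σ j) (y j)

def projT (T : Finset ℤ) (x : ConfN × ConfN) : {j // j ∈ T} → ℕ × ℕ :=
  fun i => (x.1 i, x.2 i)

lemma measurable_projT (T : Finset ℤ) : Measurable (projT T) :=
  measurable_pi_lambda _ fun i =>
    ((measurable_pi_apply (i : ℤ)).comp measurable_fst).prodMk
      ((measurable_pi_apply (i : ℤ)).comp measurable_snd)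

lemma multiFactor_singleton (g : ℕ → ℝ) (σ : ℤ → ℝ) (m : ℤ → ℕ) (i : ℤ) (p : ℕ × ℕ) :
    multiFactor g σ m i {p} =
      ENNReal.ofReal (if p.2 = p.1 + m i then muN g (σ i) p.1 else 0) := by
  unfold multiFactor siteMeasure
  rw [withDensity_apply _ (measurableSet_singleton p), lintegral_singleton]
  simp [Measure.count_singleton]

lemma multiFactor_offdiag (g : ℕ → ℝ) (σ : ℤ → ℝ) (m : ℤ → ℕ) (i : ℤ) :
    multiFactor g σ m i {p : ℕ × ℕ | ¬ p.2 = p.1 + m i} = 0 := by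
  unfold multiFactor siteMeasure
  have hms : MeasurableSet {p : ℕ × ℕ | ¬ p.2 = p.1 + m i} :=
    (Set.to_countable _).measurableSet
  rw [withDensity_apply _ hms]
  have : ∀ᵐ p ∂(Measure.count.restrict {p : ℕ × ℕ | ¬ p.2 = p.1 + m i}),
      ENNReal.ofReal (if p.2 = p.1 + m i then muN g (σ i) p.1 else 0) = 0 := by
    filter_upwards [MeasureTheory.ae_restrict_mem hms] with p hp
    simp [if_neg hp]
  rw [lintegral_congr_ae this, lintegral_zero]

lemma isProb (fac : ℤ → Measure (ℕ × ℕ)) (ν : Measure (ConfN × ConfN))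
    (hp : IsProductMeasure fac ν) : IsProbabilityMeasure ν := by
  constructor
  have := hp ∅ (fun _ => Set.univ)
  simpa using this

lemma ae_diag {g : ℕ → ℝ} {σ : ℤ → ℝ} {m : ℤ → ℕ} {ν : Measure (ConfN × ConfN)}
    (hp : IsProductMeasure (multiFactor g σ m) ν) (i : ℤ) :
    ∀ᵐ x ∂ν, x.2 i = x.1 i + m i := by
  rw [MeasureTheory.ae_iff]
  have h := hp {i} (fun j => {p : ℕ × ℕ | ¬ p.2 = p.1 + m j})
  have hset : {x : ConfN × ConfN | ¬ x.2 i = x.1 i + m i}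
      = {x : ConfN × ConfN | ∀ j ∈ ({i} : Finset ℤ),
          (x.1 j, x.2 j) ∈ {p : ℕ × ℕ | ¬ p.2 = p.1 + m j}} := by
    ext x; simp
  rw [hset, h, Finset.prod_singleton, multiFactor_offdiag]

variable {σ' : ℤ → ℝ} {m' : ℤ → ℕ} {ν' : Measure (ConfN × ConfN)}

lemma integrable_cyl (hp : IsProductMeasure (multiFactor g σ' m') ν')
    (T : Finset ℤ) (ψ : ConfN × ConfN → ℝ)
    (hdep : ∀ x y : ConfN × ConfN, (∀ i ∈ T, x.1 i = y.1 i ∧ x.2 i = y.2 i) → ψ x = ψ y)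
    (C : ℝ) (hbd : ∀ x, |ψ x| ≤ C) : Integrable ψ ν' := by
  have hprob : IsProbabilityMeasure ν' := isProb _ _ hp
  have hmeas : Measurable ψ := by
    have hfac : ψ = (fun c : ({j // j ∈ T} → ℕ × ℕ) =>
        ψ (fun j => if h : j ∈ T then (c ⟨j, h⟩).1 else 0,
           fun j => if h : j ∈ T then (c ⟨j, h⟩).2 else 0)) ∘ projT T := by
      funext x
      exact hdep x _ (fun i hi => by simp [projT, hi])
    rw [hfac]
    exact (measurable_of_countable _).comp (measurable_projT T)
  refine ⟨hmeas.aestronglyMeasurable, HasFiniteIntegral.of_bounded (C := C) ?_⟩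
  exact Filter.Eventually.of_forall fun x => by rw [Real.norm_eq_abs]; exact hbd x

lemma repr_integral
    (h𝔞 : 0 < 𝔞) (hβ : 0 < β) (hg : ∀ y : ℕ, g y = 𝔞 * (1 - exp (-β * y)))
    (hσa' : ∀ i : ℤ, exp (σ' i) < 𝔞)
    (hp : IsProductMeasure (multiFactor g σ' m') ν')
    (T : Finset ℤ) (ψ : ConfN × ConfN → ℝ)
    (hdep : ∀ x y : ConfN × ConfN, (∀ i ∈ T, x.1 i = y.1 i ∧ x.2 i = y.2 i) → ψ x = ψ y)
    (C : ℝ) (hbd : ∀ x, |ψ x| ≤ C) :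
    ∫ x, ψ x ∂ν' = ∑' y : {j // j ∈ T} → ℕ, weight g σ' T y * ψ (pairC m' T y) := by
  classical
  have hprob : IsProbabilityMeasure ν' := isProb _ _ hp
  set ψb : ({j // j ∈ T} → ℕ × ℕ) → ℝ := fun c =>
    ψ (fun j => if h : j ∈ T then (c ⟨j, h⟩).1 else 0,
       fun j => if h : j ∈ T then (c ⟨j, h⟩).2 else 0) with hψb
  have hfac : ∀ x, ψ x = ψb (projT T x) := fun x =>
    hdep x _ (fun i hi => by simp [ψb, projT, hi])
  have hmprob : IsProbabilityMeasure (ν'.map (projT T)) :=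
    Measure.isProbabilityMeasure_map (measurable_projT T).aemeasurable
  have hint : Integrable ψb (ν'.map (projT T)) :=
    ⟨(measurable_of_countable _).aestronglyMeasurable,
      HasFiniteIntegral.of_bounded (C := C) (Filter.Eventually.of_forall fun c => by
        rw [Real.norm_eq_abs]; exact hbd _)⟩
  have hmap : ∫ x, ψ x ∂ν' = ∫ c, ψb c ∂(ν'.map (projT T)) := by
    rw [integral_map (measurable_projT T).aemeasurable
      (measurable_of_countable _).aestronglyMeasurable]
    exact integral_congr_ae (Filter.Eventually.of_forall fun x => hfac x)
  set wgt : {j // j ∈ T} → ℕ × ℕ → ℝ := fun j p =>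
    if p.2 = p.1 + m' j then muN g (σ' j) p.1 else 0 with hwgt
  have hsingle : ∀ c : {j // j ∈ T} → ℕ × ℕ,
      (ν'.map (projT T)) {c} = ∏ j ∈ T.attach, ENNReal.ofReal (wgt j (c j)) := by
    intro c
    rw [Measure.map_apply (measurable_projT T) (measurableSet_singleton c)]
    have hset : projT T ⁻¹' {c} = {x : ConfN × ConfN | ∀ j ∈ T,
        (x.1 j, x.2 j) ∈ (if h : j ∈ T then ({c ⟨j, h⟩} : Set (ℕ × ℕ)) else Set.univ)} := by
      ext x
      simp only [Set.mem_preimage, Set.mem_singleton_iff, funext_iff, Set.mem_setOf_eq]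
      constructor
      · intro h j hj
        rw [dif_pos hj]
        exact h ⟨j, hj⟩
      · intro h j
        have := h (j : ℤ) j.2
        rw [dif_pos j.2] at this
        simpa [projT] using this
    rw [hset, hp T _]
    rw [← Finset.prod_attach T
      (fun j => multiFactor g σ' m' j (if h : j ∈ T then ({c ⟨j, h⟩} : Set (ℕ × ℕ)) else Set.univ))]
    apply Finset.prod_congr rfl
    intro j _
    rw [dif_pos j.2, Subtype.coe_eta, multiFactor_singleton]
  have hwnonneg : ∀ (j : {j // j ∈ T}) (p : ℕ × ℕ), 0 ≤ wgt j p := by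
    intro j p
    simp only [hwgt]
    split
    · exact muN_nonneg h𝔞 hβ hg (hσa' j) p.1
    · exact le_refl 0
  have htoReal : ∀ c : {j // j ∈ T} → ℕ × ℕ,
      ((ν'.map (projT T)) {c}).toReal = ∏ j ∈ T.attach, wgt j (c j) := by
    intro c
    rw [hsingle, ENNReal.toReal_prod]
    exact Finset.prod_congr rfl fun j _ => ENNReal.toReal_ofReal (hwnonneg j (c j))
  rw [hmap, integral_countable' hint]
  have hterm : ∀ c : {j // j ∈ T} → ℕ × ℕ,
      (ν'.map (projT T)).real {c} • ψb c = (∏ j ∈ T.attach, wgt j (c j)) * ψb c := by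
    intro c; rw [measureReal_def, htoReal, smul_eq_mul]
  rw [tsum_congr hterm]
  set e : ({j // j ∈ T} → ℕ) → ({j // j ∈ T} → ℕ × ℕ) :=
    fun y j => (y j, y j + m' j) with he
  have hinj : Function.Injective e := by
    intro a b hab
    funext j
    have := congrFun hab j
    simp only [he, Prod.mk.injEq] at this
    exact this.1
  have hsupp : Function.support (fun c => (∏ j ∈ T.attach, wgt j (c j)) * ψb c)
      ⊆ Set.range e := by
    intro c hc
    by_contra hr
    apply hc
    have : ∃ j : {j // j ∈ T}, ¬ (c j).2 = (c j).1 + m' j := by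
      by_contra hall
      push_neg at hall
      exact hr ⟨fun j => (c j).1, funext fun j => Prod.ext rfl ((hall j).symm) ⟩
    obtain ⟨j, hj⟩ := this
    have : (∏ j ∈ T.attach, wgt j (c j)) = 0 :=
      Finset.prod_eq_zero (Finset.mem_attach T j) (if_neg hj)
    simp [this]
  rw [← hinj.tsum_eq hsupp]
  apply tsum_congr
  intro y
  have h1 : (∏ j ∈ T.attach, wgt j (e y j)) = weight g σ' T y :=
    Finset.prod_congr rfl fun j _ => if_pos rfl
  have h2 : ψb (e y) = ψ (pairC m' T y) := by
    apply hdep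
    intro i hi
    simp [ψb, he, pairC, embC, hi]
  rw [h1, h2]

end Measures

section Weight

variable {T : Finset ℤ}

lemma weight_erase (g : ℕ → ℝ) (σ : ℤ → ℝ) (T : Finset ℤ) (i : {j // j ∈ T})
    (y : {j // j ∈ T} → ℕ) :
    weight g σ T y = muN g (σ i) (y i) * ∏ j ∈ T.attach.erase i, muN g (σ j) (y j) :=
  (Finset.mul_prod_erase T.attach _ (Finset.mem_attach T i)).symm

lemma weight_update (g : ℕ → ℝ) (σ : ℤ → ℝ) (T : Finset ℤ) (i : {j // j ∈ T})
    (y : {j // j ∈ T} → ℕ) (v : ℕ) :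
    weight g σ T (Function.update y i v)
      = muN g (σ i) v * ∏ j ∈ T.attach.erase i, muN g (σ j) (y j) := by
  rw [weight_erase g σ T i, Function.update_self]
  congr 1
  refine Finset.prod_congr rfl fun j hj => ?_
  rw [Function.update_of_ne (Finset.ne_of_mem_erase hj)]

lemma weight_update_sigma (g : ℕ → ℝ) (σ : ℤ → ℝ) (T : Finset ℤ) (i : {j // j ∈ T})
    (c : ℝ) (y : {j // j ∈ T} → ℕ) :
    weight g (Function.update σ (i : ℤ) c) T y
      = muN g c (y i) * ∏ j ∈ T.attach.erase i, muN g (σ j) (y j) := by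
  rw [weight_erase _ _ T i, Function.update_self]
  congr 1
  refine Finset.prod_congr rfl fun j hj => ?_
  have hji : (j : ℤ) ≠ (i : ℤ) := fun h => (Finset.ne_of_mem_erase hj) (Subtype.ext h)
  rw [Function.update_of_ne hji]

lemma embC_update (T : Finset ℤ) (y : {j // j ∈ T} → ℕ) (i : {j // j ∈ T}) (v : ℕ)
    (k : ℤ) (hk : k ∈ T) :
    embC T (Function.update y i v) k = if k = (i : ℤ) then v else embC T y k := by
  unfold embC
  by_cases hki : k = (i : ℤ)
  · subst hki
    rw [dif_pos hk, if_pos rfl]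
    have h2 : (⟨(i : ℤ), hk⟩ : {j // j ∈ T}) = i := Subtype.ext rfl
    rw [h2, Function.update_self]
  · rw [dif_pos hk, if_neg hki, dif_pos hk]
    have : (⟨k, hk⟩ : {j // j ∈ T}) ≠ i := fun h => hki (congrArg Subtype.val h)
    rw [Function.update_of_ne this]

lemma embC_update_notmem (T : Finset ℤ) (y : {j // j ∈ T} → ℕ) (i : {j // j ∈ T}) (v : ℕ)
    (k : ℤ) (hk : k ∉ T) :
    embC T (Function.update y i v) k = 0 := by
  unfold embC; rw [dif_neg hk]

lemma embC_apply (T : Finset ℤ) (y : {j // j ∈ T} → ℕ) (k : ℤ) (hk : k ∈ T) :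
    embC T y k = y ⟨k, hk⟩ := by
  unfold embC; rw [dif_pos hk]

end Weight

section Klemmas

lemma pairC_def (m : ℤ → ℕ) (T : Finset ℤ) (y : {j // j ∈ T} → ℕ) :
    pairC m T y = (embC T y, fun j => embC T y j + m j) := rfl

@[simp] lemma pairC_fst (m : ℤ → ℕ) (T : Finset ℤ) (y : {j // j ∈ T} → ℕ) :
    (pairC m T y).1 = embC T y := rfl

@[simp] lemma pairC_snd (m : ℤ → ℕ) (T : Finset ℤ) (y : {j // j ∈ T} → ℕ) :
    (pairC m T y).2 = fun j => embC T y j + m j := rfl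

lemma move_emb_fst (T : Finset ℤ) (i : ℤ) (hiT : i ∈ T) (hi1T : i + 1 ∈ T)
    (y : {j // j ∈ T} → ℕ) :
    moveN (embC T (Function.update y ⟨i, hiT⟩ (y ⟨i, hiT⟩ + 1))) i (i + 1)
      = embC T (Function.update y ⟨i + 1, hi1T⟩ (y ⟨i + 1, hi1T⟩ + 1)) := by
  funext k
  by_cases hki : k = i
  · subst hki
    simp [moveN, embC, Function.update_apply, Subtype.mk.injEq, hiT,
      show k ≠ k + 1 by omega]
  · by_cases hki1 : k = i + 1
    · subst hki1
      simp [moveN, embC, Function.update_apply, Subtype.mk.injEq, hi1T, hki,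
        show i + 1 ≠ i by omega]
    · by_cases hk : k ∈ T
      · simp [moveN, embC, Function.update_apply, Subtype.mk.injEq, hk, hki, hki1]
      · simp [moveN, embC, Function.update_apply, hk, hki, hki1]

lemma move_emb_snd (T : Finset ℤ) (i : ℤ) (hiT : i ∈ T) (hi1T : i + 1 ∈ T)
    (m' : ℤ → ℕ) (y : {j // j ∈ T} → ℕ) :
    moveN (fun j => embC T (Function.update y ⟨i, hiT⟩ (y ⟨i, hiT⟩ + 1)) j + m' j) i (i + 1)
      = fun j => embC T (Function.update y ⟨i + 1, hi1T⟩ (y ⟨i + 1, hi1T⟩ + 1)) j + m' j := by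
  funext k
  by_cases hki : k = i
  · subst hki
    simp [moveN, embC, Function.update_apply, Subtype.mk.injEq, hiT,
      show k ≠ k + 1 by omega]
  · by_cases hki1 : k = i + 1
    · subst hki1
      simp only [moveN, embC, Function.update_apply, Subtype.mk.injEq, hki,
        if_neg (show ¬ (i + 1 = i) by omega), if_pos rfl, dif_pos hi1T]
      simp [Subtype.mk.injEq]
      omega
    · by_cases hk : k ∈ T
      · simp [moveN, embC, Function.update_apply, Subtype.mk.injEq, hk, hki, hki1]
      · simp [moveN, embC, Function.update_apply, hk, hki, hki1]

lemma move_shock (T : Finset ℤ) (i : ℤ) (m' : ℤ → ℕ) (hm1 : 1 ≤ m' i)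
    (y : {j // j ∈ T} → ℕ) :
    moveN (fun j => embC T y j + m' j) i (i + 1)
      = fun j => embC T y j + moveN m' i (i + 1) j := by
  funext k
  by_cases hki : k = i
  · subst hki
    simp [moveN]
    omega
  · by_cases hki1 : k = i + 1
    · subst hki1
      simp [moveN, hki]
      omega
    · simp [moveN, hki, hki1]

variable {σ' : ℤ → ℝ} {m' : ℤ → ℕ} {ν' : Measure (ConfN × ConfN)}

lemma K1 (h𝔞 : 0 < 𝔞) (hβ : 0 < β) (hg : ∀ y : ℕ, g y = 𝔞 * (1 - exp (-β * y)))
    (hσa' : ∀ i : ℤ, exp (σ' i) < 𝔞)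
    (hp : IsProductMeasure (multiFactor g σ' m') ν')
    (T s : Finset ℤ) (hsT : s ⊆ T) (φ : ConfN × ConfN → ℝ)
    (hdep : ∀ x y : ConfN × ConfN, (∀ i ∈ s, x.1 i = y.1 i ∧ x.2 i = y.2 i) → φ x = φ y)
    (C : ℝ) (hbd : ∀ x, |φ x| ≤ C)
    (i : ℤ) (hiT : i ∈ T) (hi1T : i + 1 ∈ T) :
    exp (σ' (i + 1)) * ∫ x, g (x.1 i) * φ (moveN x.1 i (i + 1), moveN x.2 i (i + 1)) ∂ν'
      = exp (σ' i) * ∫ x, g (x.1 (i + 1)) * φ x ∂ν' := by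
  have hgbd : ∀ n : ℕ, |g n| ≤ 𝔞 := fun n => by
    rw [abs_of_nonneg (g_nonneg h𝔞 hβ hg n)]; exact g_le h𝔞 hβ hg n
  have hmv : ∀ (η η' : ConfN), (∀ k ∈ T, η k = η' k) →
      ∀ j ∈ s, moveN η i (i + 1) j = moveN η' i (i + 1) j := by
    intro η η' hagree j hj
    unfold moveN
    split_ifs with h1 h2
    · rw [h1, hagree i hiT]
    · rw [h2, hagree (i + 1) hi1T]
    · exact hagree j (hsT hj)
  have hdep1 : ∀ x y : ConfN × ConfN, (∀ k ∈ T, x.1 k = y.1 k ∧ x.2 k = y.2 k) →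
      g (x.1 i) * φ (moveN x.1 i (i + 1), moveN x.2 i (i + 1))
        = g (y.1 i) * φ (moveN y.1 i (i + 1), moveN y.2 i (i + 1)) := by
    intro x y h
    rw [(h i hiT).1]
    congr 1
    exact hdep _ _ fun j hj =>
      ⟨hmv _ _ (fun k hk => (h k hk).1) j hj, hmv _ _ (fun k hk => (h k hk).2) j hj⟩
  have hdep2 : ∀ x y : ConfN × ConfN, (∀ k ∈ T, x.1 k = y.1 k ∧ x.2 k = y.2 k) →
      g (x.1 (i + 1)) * φ x = g (y.1 (i + 1)) * φ y := by
    intro x y h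
    rw [(h (i + 1) hi1T).1]
    congr 1
    exact hdep _ _ fun j hj => h j (hsT hj)
  have hC0 : 0 ≤ C := le_trans (abs_nonneg _) (hbd (fun _ => 0, fun _ => 0))
  have hbd1 : ∀ x : ConfN × ConfN,
      |g (x.1 i) * φ (moveN x.1 i (i + 1), moveN x.2 i (i + 1))| ≤ 𝔞 * C := fun x => by
    rw [abs_mul]
    exact mul_le_mul (hgbd _) (hbd _) (abs_nonneg _) (le_of_lt h𝔞)
  have hbd2 : ∀ x : ConfN × ConfN, |g (x.1 (i + 1)) * φ x| ≤ 𝔞 * C := fun x => by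
    rw [abs_mul]
    exact mul_le_mul (hgbd _) (hbd _) (abs_nonneg _) (le_of_lt h𝔞)
  rw [repr_integral h𝔞 hβ hg hσa' hp T _ hdep1 (𝔞 * C) hbd1,
      repr_integral h𝔞 hβ hg hσa' hp T _ hdep2 (𝔞 * C) hbd2]
  simp only [pairC_fst, pairC_snd]
  rw [← tsum_mul_left, ← tsum_mul_left]
  rw [tsum_update_shift
    (fun y : {j // j ∈ T} → ℕ => exp (σ' (i + 1)) * (weight g σ' T y *
      (g (embC T y i) * φ (moveN (embC T y) i (i + 1),
        moveN (fun j => embC T y j + m' j) i (i + 1))))) ⟨i, hiT⟩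
    (fun y hy => by
      beta_reduce
      rw [embC_apply _ _ _ hiT, hy, g_zero h𝔞 hβ hg]
      ring)]
  rw [tsum_update_shift
    (fun y : {j // j ∈ T} → ℕ => exp (σ' i) * (weight g σ' T y *
      (g (embC T y (i + 1)) * φ (pairC m' T y)))) ⟨i + 1, hi1T⟩
    (fun y hy => by
      beta_reduce
      rw [embC_apply _ _ _ hi1T, hy, g_zero h𝔞 hβ hg]
      ring)]
  apply tsum_congr
  intro y
  beta_reduce
  rw [move_emb_fst T i hiT hi1T y, move_emb_snd T i hiT hi1T m' y]
  rw [embC_update _ _ _ _ _ hiT, if_pos rfl]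
  rw [embC_update _ _ _ _ _ hi1T, if_pos rfl]
  rw [weight_update g σ' T ⟨i, hiT⟩ y, weight_update g σ' T ⟨i + 1, hi1T⟩ y]
  have h1 := muN_succ h𝔞 hβ hg (hσa' i) (y ⟨i, hiT⟩)
  have h2 := muN_succ h𝔞 hβ hg (hσa' (i + 1)) (y ⟨i + 1, hi1T⟩)
  have hpair : φ (pairC m' T (Function.update y ⟨i + 1, hi1T⟩ (y ⟨i + 1, hi1T⟩ + 1)))
      = φ (embC T (Function.update y ⟨i + 1, hi1T⟩ (y ⟨i + 1, hi1T⟩ + 1)),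
          fun j => embC T (Function.update y ⟨i + 1, hi1T⟩ (y ⟨i + 1, hi1T⟩ + 1)) j + m' j) :=
    rfl
  rw [hpair]
  have hw1 := weight_erase g σ' T (⟨i, hiT⟩ : {j // j ∈ T}) y
  have hw2 := weight_erase g σ' T (⟨i + 1, hi1T⟩ : {j // j ∈ T}) y
  set P1 := ∏ j ∈ T.attach.erase ⟨i, hiT⟩, muN g (σ' j) (y j)
  set P2 := ∏ j ∈ T.attach.erase ⟨i + 1, hi1T⟩, muN g (σ' j) (y j)
  set Φ := φ (embC T (Function.update y ⟨i + 1, hi1T⟩ (y ⟨i + 1, hi1T⟩ + 1)),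
          fun j => embC T (Function.update y ⟨i + 1, hi1T⟩ (y ⟨i + 1, hi1T⟩ + 1)) j + m' j)
  -- goal: e^{θ'} * (muN θ (yi+1) * P1 * (g (yi+1) * Φ)) = e^{θ} * (muN θ' (yj+1) * P2 * (g (yj+1) * Φ))
  have hcoe1 : ((⟨i, hiT⟩ : {j // j ∈ T}) : ℤ) = i := rfl
  have hcoe2 : ((⟨i + 1, hi1T⟩ : {j // j ∈ T}) : ℤ) = i + 1 := rfl
  have e1 : muN g (σ' i) (y ⟨i, hiT⟩ + 1) * P1 * (g (y ⟨i, hiT⟩ + 1) * Φ)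
      = exp (σ' i) * (weight g σ' T y * Φ) := by
    rw [hw1, hcoe1]
    linear_combination (P1 * Φ) * h1
  have e2 : muN g (σ' (i + 1)) (y ⟨i + 1, hi1T⟩ + 1) * P2 * (g (y ⟨i + 1, hi1T⟩ + 1) * Φ)
      = exp (σ' (i + 1)) * (weight g σ' T y * Φ) := by
    rw [hw2, hcoe2]
    linear_combination (P2 * Φ) * h2
  rw [hcoe1, hcoe2, e1, e2]
  ring

lemma K4 (h𝔞 : 0 < 𝔞) (hβ : 0 < β) (hg : ∀ y : ℕ, g y = 𝔞 * (1 - exp (-β * y)))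
    (hσa' : ∀ i : ℤ, exp (σ' i) < 𝔞)
    (hp : IsProductMeasure (multiFactor g σ' m') ν')
    (T s : Finset ℤ) (hsT : s ⊆ T) (φ : ConfN × ConfN → ℝ)
    (hdep : ∀ x y : ConfN × ConfN, (∀ i ∈ s, x.1 i = y.1 i ∧ x.2 i = y.2 i) → φ x = φ y)
    (C : ℝ) (hbd : ∀ x, |φ x| ≤ C)
    (j : ℤ) (hjT : j ∈ T) (hjs : j ∉ s) :
    ∫ x, g (x.1 j) * φ x ∂ν' = exp (σ' j) * ∫ x, φ x ∂ν' := by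
  have hgbd : ∀ n : ℕ, |g n| ≤ 𝔞 := fun n => by
    rw [abs_of_nonneg (g_nonneg h𝔞 hβ hg n)]; exact g_le h𝔞 hβ hg n
  have hdep0 : ∀ x y : ConfN × ConfN, (∀ k ∈ T, x.1 k = y.1 k ∧ x.2 k = y.2 k) → φ x = φ y :=
    fun x y h => hdep x y fun k hk => h k (hsT hk)
  have hdepj : ∀ x y : ConfN × ConfN, (∀ k ∈ T, x.1 k = y.1 k ∧ x.2 k = y.2 k) →
      g (x.1 j) * φ x = g (y.1 j) * φ y := by
    intro x y h
    rw [(h j hjT).1, hdep0 x y h]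
  have hbdj : ∀ x : ConfN × ConfN, |g (x.1 j) * φ x| ≤ 𝔞 * C := fun x => by
    rw [abs_mul]
    exact mul_le_mul (hgbd _) (hbd _) (abs_nonneg _) (le_of_lt h𝔞)
  rw [repr_integral h𝔞 hβ hg hσa' hp T _ hdepj (𝔞 * C) hbdj,
      repr_integral h𝔞 hβ hg hσa' hp T φ hdep0 C hbd, ← tsum_mul_left]
  simp only [pairC_fst]
  rw [tsum_update_shift
    (fun y : {j // j ∈ T} → ℕ => weight g σ' T y * (g (embC T y j) * φ (pairC m' T y)))
    ⟨j, hjT⟩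
    (fun y hy => by
      beta_reduce
      rw [embC_apply _ _ _ hjT, hy, g_zero h𝔞 hβ hg]
      ring)]
  apply tsum_congr
  intro y
  beta_reduce
  have hcoe : ((⟨j, hjT⟩ : {k // k ∈ T}) : ℤ) = j := rfl
  have hφeq : φ (pairC m' T (Function.update y ⟨j, hjT⟩ (y ⟨j, hjT⟩ + 1)))
      = φ (pairC m' T y) := by
    apply hdep
    intro k hk
    have hkj : k ≠ j := fun h => hjs (h ▸ hk)
    have hfst : embC T (Function.update y ⟨j, hjT⟩ (y ⟨j, hjT⟩ + 1)) k = embC T y k := by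
      rw [embC_update _ _ _ _ _ (hsT hk), if_neg (by rw [hcoe]; exact hkj)]
    exact ⟨hfst, by simp only [pairC_snd, hfst]⟩
  rw [embC_update _ _ _ _ _ hjT, if_pos rfl, hφeq,
      weight_update g σ' T ⟨j, hjT⟩ y,
      weight_erase g σ' T ⟨j, hjT⟩ y, hcoe]
  have h1 := muN_succ h𝔞 hβ hg (hσa' j) (y ⟨j, hjT⟩)
  linear_combination ((∏ k ∈ T.attach.erase ⟨j, hjT⟩, muN g (σ' k) (y k)) *
    φ (pairC m' T y)) * h1

lemma K2 (h𝔞 : 0 < 𝔞) (hβ : 0 < β) (hg : ∀ y : ℕ, g y = 𝔞 * (1 - exp (-β * y)))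
    (hσa' : ∀ i : ℤ, exp (σ' i) < 𝔞)
    (hp : IsProductMeasure (multiFactor g σ' m') ν')
    (T s : Finset ℤ) (hsT : s ⊆ T) (φ : ConfN × ConfN → ℝ)
    (hdep : ∀ x y : ConfN × ConfN, (∀ i ∈ s, x.1 i = y.1 i ∧ x.2 i = y.2 i) → φ x = φ y)
    (C : ℝ) (hbd : ∀ x, |φ x| ≤ C)
    (i : ℤ) (hiT : i ∈ T) (hi1T : i + 1 ∈ T) (hm1 : 1 ≤ m' i)
    (ν₂ : Measure (ConfN × ConfN))
    (hσa₂ : ∀ k : ℤ, exp (Function.update σ' i (σ' i - β) k) < 𝔞)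
    (hp₂ : IsProductMeasure
      (multiFactor g (Function.update σ' i (σ' i - β)) (moveN m' i (i + 1))) ν₂) :
    ∫ x, 𝔞 * exp (-β) ^ (x.1 i) * φ (x.1, moveN x.2 i (i + 1)) ∂ν'
      = (𝔞 - exp (σ' i)) * ∫ x, φ x ∂ν₂ := by
  have hq0 := q_pos h𝔞 hβ hg
  have hq1 := q_lt_one h𝔞 hβ hg
  have hC0 : 0 ≤ C := le_trans (abs_nonneg _) (hbd (fun _ => 0, fun _ => 0))
  have hmv : ∀ (η η' : ConfN), (∀ k ∈ T, η k = η' k) →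
      ∀ j ∈ s, moveN η i (i + 1) j = moveN η' i (i + 1) j := by
    intro η η' hagree j hj
    unfold moveN
    split_ifs with h1 h2
    · rw [h1, hagree i hiT]
    · rw [h2, hagree (i + 1) hi1T]
    · exact hagree j (hsT hj)
  have hdep2 : ∀ x y : ConfN × ConfN, (∀ k ∈ T, x.1 k = y.1 k ∧ x.2 k = y.2 k) →
      𝔞 * exp (-β) ^ (x.1 i) * φ (x.1, moveN x.2 i (i + 1))
        = 𝔞 * exp (-β) ^ (y.1 i) * φ (y.1, moveN y.2 i (i + 1)) := by
    intro x y h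
    rw [(h i hiT).1]
    congr 1
    exact hdep _ _ fun j hj =>
      ⟨(h j (hsT hj)).1, hmv _ _ (fun k hk => (h k hk).2) j hj⟩
  have hdep0 : ∀ x y : ConfN × ConfN, (∀ k ∈ T, x.1 k = y.1 k ∧ x.2 k = y.2 k) → φ x = φ y :=
    fun x y h => hdep x y fun k hk => h k (hsT hk)
  have hbd2 : ∀ x : ConfN × ConfN,
      |𝔞 * exp (-β) ^ (x.1 i) * φ (x.1, moveN x.2 i (i + 1))| ≤ 𝔞 * C := fun x => by
    rw [abs_mul]
    have h1 : |𝔞 * exp (-β) ^ (x.1 i)| ≤ 𝔞 := by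
      rw [abs_of_nonneg (by positivity)]
      nlinarith [pow_le_one₀ (le_of_lt hq0) (le_of_lt hq1) (n := x.1 i)]
    exact mul_le_mul h1 (hbd _) (abs_nonneg _) (le_of_lt h𝔞)
  rw [repr_integral h𝔞 hβ hg hσa' hp T _ hdep2 (𝔞 * C) hbd2,
      repr_integral h𝔞 hβ hg hσa₂ hp₂ T φ hdep0 C hbd, ← tsum_mul_left]
  apply tsum_congr
  intro y
  beta_reduce
  simp only [pairC_def]
  rw [move_shock T i m' hm1 y]
  rw [embC_apply _ _ _ hiT]
  have hcoe : ((⟨i, hiT⟩ : {k // k ∈ T}) : ℤ) = i := rfl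
  have hw1 := weight_erase g σ' T ⟨i, hiT⟩ y
  have hw2 := weight_update_sigma g σ' T ⟨i, hiT⟩ (σ' i - β) y
  rw [hcoe] at hw1 hw2
  rw [hw1, hw2]
  have ht := muN_tilt h𝔞 hβ hg (hσa' i) (y ⟨i, hiT⟩)
  linear_combination (-((∏ k ∈ T.attach.erase ⟨i, hiT⟩, muN g (σ' k) (y k)) *
    φ (embC T y, fun j => embC T y j + moveN m' i (i + 1) j))) * ht

end Klemmas

end RWS


/-- Theorem 2, case (ii): multiple random walking shocks in the totally asymmetric q-zero
range process. The walker at site `i` jumps to `i + 1` with rate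
`(1 - e^{-β m_i})·(𝔞 - e^{σ_i})`, updating `m` by `m^{i,i+1}` and `σ_i` to `σ_i - β`. -/
theorem rws_multi_qTAZRP
    (𝔞 β : ℝ) (h𝔞 : 0 < 𝔞) (hβ : 0 < β)
    (g : ℕ → ℝ) (hg : ∀ y : ℕ, g y = 𝔞 * (1 - exp (-β * y)))
    (m : ℤ → ℕ) (hm : (Function.support m).Finite)
    (σ : ℤ → ℝ) (hσ : ∀ i : ℤ, σ (i - 1) - σ i = -β * m i)
    (hσa : ∀ i : ℤ, exp (σ i) < 𝔞)
    (ν : (ℤ → ℝ) → (ℤ → ℕ) → Measure (ConfN × ConfN))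
    (hν : ∀ (σ' : ℤ → ℝ) (m' : ℤ → ℕ), (Function.support m').Finite →
      (∀ i : ℤ, σ' (i - 1) - σ' i = -β * m' i) → (∀ i : ℤ, exp (σ' i) < 𝔞) →
      IsProductMeasure (multiFactor g σ' m') (ν σ' m'))
    (φ : ConfN × ConfN → ℝ) (hφ : IsBddCylinder φ) :
    ∫ x, LN 1 g φ x ∂(ν σ m)
      = ∑' i : ℤ, (1 - exp (-β * m i)) * (𝔞 - exp (σ i)) *
          ((∫ x, φ x ∂(ν (Function.update σ i (σ i - β)) (moveN m i (i + 1))))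
            - ∫ x, φ x ∂(ν σ m)) := by
  classical
  obtain ⟨⟨s, hdep⟩, ⟨C, hbd⟩⟩ := hφ
  have hC0 : 0 ≤ C := le_trans (abs_nonneg _) (hbd (fun _ => 0, fun _ => 0))
  have hq0 := RWS.q_pos h𝔞 hβ hg
  have hq1 := RWS.q_lt_one h𝔞 hβ hg
  have hqnat : ∀ k : ℕ, exp (-β * k) = exp (-β) ^ k := fun k => by
    rw [mul_comm, Real.exp_nat_mul]
  have hσexp : ∀ j : ℤ, exp (σ (j - 1)) = exp (-β) ^ (m j) * exp (σ j) := fun j => by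
    rw [show σ (j - 1) = -β * (m j) + σ j by linarith [hσ j], exp_add, hqnat (m j)]
  -- index sets
  set U : Finset ℤ := (s ∪ s.image (fun j => j - 1)) ∪ hm.toFinset with hU
  set T : Finset ℤ := U ∪ U.image (fun j => j + 1) with hT
  have hsU : s ⊆ U := fun j hj =>
    Finset.mem_union_left _ (Finset.mem_union_left _ hj)
  have hs1U : ∀ j ∈ s, j - 1 ∈ U := fun j hj =>
    Finset.mem_union_left _ (Finset.mem_union_right _ (Finset.mem_image_of_mem _ hj))
  have hmU : ∀ i : ℤ, m i ≠ 0 → i ∈ U := fun i hi =>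
    Finset.mem_union_right _ (by rwa [Set.Finite.mem_toFinset hm, Function.mem_support])
  have hm0 : ∀ i : ℤ, i ∉ U → m i = 0 := fun i hi => by
    by_contra h; exact hi (hmU i h)
  have hUT : U ⊆ T := fun j hj => Finset.mem_union_left _ hj
  have hU1T : ∀ i ∈ U, i + 1 ∈ T := fun i hi =>
    Finset.mem_union_right _ (Finset.mem_image_of_mem _ hi)
  have hsT : s ⊆ T := fun j hj => hUT (hsU hj)
  have hsIm : s ⊆ U.image (fun j => j + 1) := fun j hj => by
    rw [Finset.mem_image]
    exact ⟨j - 1, hs1U j hj, by ring⟩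
  have hImT : U.image (fun j => j + 1) ⊆ T := fun j hj => Finset.mem_union_right _ hj
  -- product measure facts
  have hp : IsProductMeasure (multiFactor g σ m) (ν σ m) := hν σ m hm hσ hσa
  have hprob : IsProbabilityMeasure (ν σ m) := RWS.isProb _ _ hp
  -- dependence helpers
  have hdep0 : ∀ x y : ConfN × ConfN, (∀ k ∈ T, x.1 k = y.1 k ∧ x.2 k = y.2 k) → φ x = φ y :=
    fun x y h => hdep x y fun k hk => h k (hsT hk)
  have hmv : ∀ (i : ℤ), i ∈ T → i + 1 ∈ T → ∀ (η η' : ConfN), (∀ k ∈ T, η k = η' k) →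
      ∀ j ∈ s, moveN η i (i + 1) j = moveN η' i (i + 1) j := by
    intro i hiT hi1T η η' hagree j hj
    unfold moveN
    split_ifs with h1 h2
    · rw [h1, hagree i hiT]
    · rw [h2, hagree (i + 1) hi1T]
    · exact hagree j (hsT hj)
  have hgbd : ∀ n : ℕ, |g n| ≤ 𝔞 := fun n => by
    rw [abs_of_nonneg (RWS.g_nonneg h𝔞 hβ hg n)]; exact RWS.g_le h𝔞 hβ hg n
  have hgsbd : ∀ a b : ℕ, |g a - g b| ≤ 𝔞 := fun a b => by
    rw [abs_sub_le_iff]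
    constructor
    · linarith [RWS.g_le h𝔞 hβ hg a, RWS.g_nonneg h𝔞 hβ hg b]
    · linarith [RWS.g_le h𝔞 hβ hg b, RWS.g_nonneg h𝔞 hβ hg a]
  -- the four atom integrands, for i with i, i+1 ∈ T
  have hdepf1 : ∀ (i : ℤ), i ∈ T → i + 1 ∈ T →
      ∀ x y : ConfN × ConfN, (∀ k ∈ T, x.1 k = y.1 k ∧ x.2 k = y.2 k) →
      g (x.1 i) * φ (moveN x.1 i (i + 1), moveN x.2 i (i + 1))
        = g (y.1 i) * φ (moveN y.1 i (i + 1), moveN y.2 i (i + 1)) := by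
    intro i hiT hi1T x y h
    rw [(h i hiT).1]
    congr 1
    exact hdep _ _ fun j hj =>
      ⟨hmv i hiT hi1T _ _ (fun k hk => (h k hk).1) j hj,
       hmv i hiT hi1T _ _ (fun k hk => (h k hk).2) j hj⟩
  have hdepf2 : ∀ (i : ℤ), i ∈ T →
      ∀ x y : ConfN × ConfN, (∀ k ∈ T, x.1 k = y.1 k ∧ x.2 k = y.2 k) →
      g (x.1 i) * φ x = g (y.1 i) * φ y := by
    intro i hiT x y h
    rw [(h i hiT).1, hdep0 x y h]
  have hdepf3 : ∀ (i : ℤ), i ∈ T → i + 1 ∈ T →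
      ∀ x y : ConfN × ConfN, (∀ k ∈ T, x.1 k = y.1 k ∧ x.2 k = y.2 k) →
      (g (x.2 i) - g (x.1 i)) * φ (x.1, moveN x.2 i (i + 1))
        = (g (y.2 i) - g (y.1 i)) * φ (y.1, moveN y.2 i (i + 1)) := by
    intro i hiT hi1T x y h
    rw [(h i hiT).1, (h i hiT).2]
    congr 1
    exact hdep _ _ fun j hj =>
      ⟨(h j (hsT hj)).1, hmv i hiT hi1T _ _ (fun k hk => (h k hk).2) j hj⟩
  have hdepf4 : ∀ (i : ℤ), i ∈ T →
      ∀ x y : ConfN × ConfN, (∀ k ∈ T, x.1 k = y.1 k ∧ x.2 k = y.2 k) →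
      (g (x.2 i) - g (x.1 i)) * φ x = (g (y.2 i) - g (y.1 i)) * φ y := by
    intro i hiT x y h
    rw [(h i hiT).1, (h i hiT).2, hdep0 x y h]
  have hintφ : Integrable φ (ν σ m) := RWS.integrable_cyl hp T φ hdep0 C hbd
  have hint1 : ∀ (i : ℤ), i ∈ T → i + 1 ∈ T →
      Integrable (fun x : ConfN × ConfN =>
        g (x.1 i) * φ (moveN x.1 i (i + 1), moveN x.2 i (i + 1))) (ν σ m) := by
    intro i hiT hi1T
    refine RWS.integrable_cyl hp T _ (hdepf1 i hiT hi1T) (𝔞 * C) fun x => ?_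
    rw [abs_mul]
    exact mul_le_mul (hgbd _) (hbd _) (abs_nonneg _) (le_of_lt h𝔞)
  have hint2 : ∀ (i : ℤ), i ∈ T →
      Integrable (fun x : ConfN × ConfN => g (x.1 i) * φ x) (ν σ m) := by
    intro i hiT
    refine RWS.integrable_cyl hp T _ (hdepf2 i hiT) (𝔞 * C) fun x => ?_
    rw [abs_mul]
    exact mul_le_mul (hgbd _) (hbd _) (abs_nonneg _) (le_of_lt h𝔞)
  have hint3 : ∀ (i : ℤ), i ∈ T → i + 1 ∈ T →
      Integrable (fun x : ConfN × ConfN =>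
        (g (x.2 i) - g (x.1 i)) * φ (x.1, moveN x.2 i (i + 1))) (ν σ m) := by
    intro i hiT hi1T
    refine RWS.integrable_cyl hp T _ (hdepf3 i hiT hi1T) (𝔞 * C) fun x => ?_
    rw [abs_mul]
    exact mul_le_mul (hgsbd _ _) (hbd _) (abs_nonneg _) (le_of_lt h𝔞)
  have hint4 : ∀ (i : ℤ), i ∈ T →
      Integrable (fun x : ConfN × ConfN => (g (x.2 i) - g (x.1 i)) * φ x) (ν σ m) := by
    intro i hiT
    refine RWS.integrable_cyl hp T _ (hdepf4 i hiT) (𝔞 * C) fun x => ?_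
    rw [abs_mul]
    exact mul_le_mul (hgsbd _ _) (hbd _) (abs_nonneg _) (le_of_lt h𝔞)
  -- reduce LN to a finite sum
  have hLN : ∀ x : ConfN × ConfN, LN 1 g φ x = ∑ i ∈ U,
      ((g (x.1 i) * φ (moveN x.1 i (i + 1), moveN x.2 i (i + 1)) - g (x.1 i) * φ x)
        + ((g (x.2 i) - g (x.1 i)) * φ (x.1, moveN x.2 i (i + 1))
            - (g (x.2 i) - g (x.1 i)) * φ x)) := by
    intro x
    unfold LN
    rw [tsum_eq_sum (s := U) ?_]
    · refine Finset.sum_congr rfl fun i _ => by ring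
    · intro i hi
      have his : i ∉ s := fun h => hi (hsU h)
      have hi1s : i + 1 ∉ s := fun h => by
        apply hi
        have := hs1U (i + 1) h
        simpa using this
      have hmvid : ∀ η : ConfN, ∀ j ∈ s, moveN η i (i + 1) j = η j := by
        intro η j hj
        unfold moveN
        rw [if_neg (show j ≠ i from fun h => his (h ▸ hj)),
            if_neg (show j ≠ i + 1 from fun h => hi1s (h ▸ hj))]
      have h1 : φ (moveN x.1 i (i + 1), moveN x.2 i (i + 1)) = φ x :=
        hdep _ _ fun j hj => ⟨hmvid x.1 j hj, hmvid x.2 j hj⟩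
      have h2 : φ (x.1, moveN x.2 i (i + 1)) = φ x :=
        hdep _ _ fun j hj => ⟨rfl, hmvid x.2 j hj⟩
      rw [h1, h2]
      ring
  rw [show (fun x => LN 1 g φ x) = fun x => ∑ i ∈ U,
      ((g (x.1 i) * φ (moveN x.1 i (i + 1), moveN x.2 i (i + 1)) - g (x.1 i) * φ x)
        + ((g (x.2 i) - g (x.1 i)) * φ (x.1, moveN x.2 i (i + 1))
            - (g (x.2 i) - g (x.1 i)) * φ x)) from funext hLN]
  have hI12 : ∀ i ∈ U, Integrable (fun x : ConfN × ConfN =>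
      g (x.1 i) * φ (moveN x.1 i (i + 1), moveN x.2 i (i + 1)) - g (x.1 i) * φ x)
      (ν σ m) := fun i hi => (hint1 i (hUT hi) (hU1T i hi)).sub (hint2 i (hUT hi))
  have hI34 : ∀ i ∈ U, Integrable (fun x : ConfN × ConfN =>
      (g (x.2 i) - g (x.1 i)) * φ (x.1, moveN x.2 i (i + 1))
        - (g (x.2 i) - g (x.1 i)) * φ x) (ν σ m) :=
    fun i hi => (hint3 i (hUT hi) (hU1T i hi)).sub (hint4 i (hUT hi))
  have hTermInt : ∀ i ∈ U, Integrable (fun x : ConfN × ConfN =>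
      (g (x.1 i) * φ (moveN x.1 i (i + 1), moveN x.2 i (i + 1)) - g (x.1 i) * φ x)
        + ((g (x.2 i) - g (x.1 i)) * φ (x.1, moveN x.2 i (i + 1))
            - (g (x.2 i) - g (x.1 i)) * φ x)) (ν σ m) :=
    fun i hi => (hI12 i hi).add (hI34 i hi)
  rw [integral_finset_sum U hTermInt]
  -- RHS reduction to finite sum
  rw [tsum_eq_sum (s := U) (f := fun i => (1 - exp (-β * m i)) * (𝔞 - exp (σ i)) *
      ((∫ x, φ x ∂(ν (Function.update σ i (σ i - β)) (moveN m i (i + 1))))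
        - ∫ x, φ x ∂(ν σ m))) ?_]
  swap
  · intro i hi
    simp [hm0 i hi]
  -- notation
  set E : ℝ := ∫ x, φ x ∂(ν σ m) with hE
  set A : ℤ → ℝ := fun j => ∫ x, g (x.1 j) * φ x ∂(ν σ m) with hA
  set D : ℤ → ℝ := fun i =>
    ∫ x, φ x ∂(ν (Function.update σ i (σ i - β)) (moveN m i (i + 1))) with hD
  -- evaluate each integral
  have hsplit : ∀ i ∈ U,
      ∫ x, ((g (x.1 i) * φ (moveN x.1 i (i + 1), moveN x.2 i (i + 1)) - g (x.1 i) * φ x)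
        + ((g (x.2 i) - g (x.1 i)) * φ (x.1, moveN x.2 i (i + 1))
            - (g (x.2 i) - g (x.1 i)) * φ x)) ∂(ν σ m)
      = (∫ x, g (x.1 i) * φ (moveN x.1 i (i + 1), moveN x.2 i (i + 1)) ∂(ν σ m)) - A i
        + ((∫ x, (g (x.2 i) - g (x.1 i)) * φ (x.1, moveN x.2 i (i + 1)) ∂(ν σ m))
            - ∫ x, (g (x.2 i) - g (x.1 i)) * φ x ∂(ν σ m)) := by
    intro i hi
    rw [integral_add (hI12 i hi) (hI34 i hi),
      integral_sub (hint1 i (hUT hi) (hU1T i hi)) (hint2 i (hUT hi)),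
      integral_sub (hint3 i (hUT hi) (hU1T i hi)) (hint4 i (hUT hi))]
  -- claim 1 : first atom
  have hclaim1 : ∀ i ∈ U,
      ∫ x, g (x.1 i) * φ (moveN x.1 i (i + 1), moveN x.2 i (i + 1)) ∂(ν σ m)
        = exp (-β) ^ (m (i + 1)) * A (i + 1) := by
    intro i hi
    have hK := RWS.K1 h𝔞 hβ hg hσa hp T s hsT φ hdep C hbd i (hUT hi) (hU1T i hi)
    have hcast : exp (σ i) = exp (-β) ^ (m (i + 1)) * exp (σ (i + 1)) := by
      have := hσexp (i + 1)
      simpa using this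
    apply mul_left_cancel₀ (exp_ne_zero (σ (i + 1)))
    rw [hK, hcast, hA]
    ring
  -- claim 3 : shock-move atom
  have hclaim3 : ∀ i ∈ U,
      ∫ x, (g (x.2 i) - g (x.1 i)) * φ (x.1, moveN x.2 i (i + 1)) ∂(ν σ m)
        = (1 - exp (-β) ^ (m i)) * ((𝔞 - exp (σ i)) * D i) := by
    intro i hi
    have hae := RWS.ae_diag hp i
    have hgdiff : ∀ n k : ℕ, g (n + k) - g n = (1 - exp (-β) ^ k) * (𝔞 * exp (-β) ^ n) := by
      intro n k
      rw [RWS.g_eq h𝔞 hβ hg, RWS.g_eq h𝔞 hβ hg, pow_add]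
      ring
    have hae2 : ∀ᵐ x ∂(ν σ m),
        (g (x.2 i) - g (x.1 i)) * φ (x.1, moveN x.2 i (i + 1))
          = (1 - exp (-β) ^ (m i)) * (𝔞 * exp (-β) ^ (x.1 i)
              * φ (x.1, moveN x.2 i (i + 1))) := by
      filter_upwards [hae] with x hx
      rw [hx, hgdiff]
      ring
    rw [integral_congr_ae hae2, integral_const_mul]
    by_cases hm1 : 1 ≤ m i
    · -- genuine case: apply K2
      congr 1
      have hm₂fin : (Function.support (moveN m i (i + 1))).Finite := by
        apply Set.Finite.subset (hm.union (Set.finite_singleton (i + 1)))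
        intro j hj
        rw [Function.mem_support] at hj
        by_cases hji1 : j = i + 1
        · exact Or.inr (by simp [hji1])
        · left
          rw [Function.mem_support]
          intro hmj
          apply hj
          unfold moveN
          split_ifs with hji
          · subst hji; omega
          · exact hmj
      have hσ₂ : ∀ j : ℤ, Function.update σ i (σ i - β) (j - 1)
          - Function.update σ i (σ i - β) j = -β * (moveN m i (i + 1) j) := by
        intro j
        by_cases hji : j = i
        · subst hji
          rw [Function.update_of_ne (by omega), Function.update_self]
          unfold moveN
          rw [if_pos rfl]
          have := hσ j
          have hcast : ((m j - 1 : ℕ) : ℝ) = (m j : ℝ) - 1 := by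
            push_cast [hm1]; ring
          rw [hcast]
          linarith
        · by_cases hji1 : j = i + 1
          · subst hji1
            rw [show i + 1 - 1 = i by ring, Function.update_self,
              Function.update_of_ne (by omega)]
            unfold moveN
            rw [if_neg (by omega), if_pos rfl]
            have h5 := hσ (i + 1)
            rw [show i + 1 - 1 = i by ring] at h5
            push_cast
            linarith
          · rw [Function.update_of_ne (by omega), Function.update_of_ne hji]
            unfold moveN
            rw [if_neg hji, if_neg hji1]
            exact hσ j
      have hσa₂ : ∀ k : ℤ, exp (Function.update σ i (σ i - β) k) < 𝔞 := by
        intro k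
        by_cases hki : k = i
        · subst hki
          rw [Function.update_self]
          calc exp (σ k - β) < exp (σ k) := by
                apply exp_lt_exp.mpr; linarith
            _ < 𝔞 := hσa k
        · rw [Function.update_of_ne hki]; exact hσa k
      have hp₂ := hν _ _ hm₂fin hσ₂ hσa₂
      exact RWS.K2 h𝔞 hβ hg hσa hp T s hsT φ hdep C hbd i (hUT hi) (hU1T i hi) hm1
        _ hσa₂ hp₂
    · -- m i = 0 : both sides vanish
      have hmi : m i = 0 := by omega
      rw [hmi]
      simp
  -- claim 4 : plain difference atom
  have hclaim4 : ∀ i ∈ U,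
      ∫ x, (g (x.2 i) - g (x.1 i)) * φ x ∂(ν σ m)
        = 𝔞 * (1 - exp (-β) ^ (m i)) * E + (exp (-β) ^ (m i) - 1) * A i := by
    intro i hi
    have hae := RWS.ae_diag hp i
    have hae2 : ∀ᵐ x ∂(ν σ m),
        (g (x.2 i) - g (x.1 i)) * φ x
          = 𝔞 * (1 - exp (-β) ^ (m i)) * φ x
              + (exp (-β) ^ (m i) - 1) * (g (x.1 i) * φ x) := by
      filter_upwards [hae] with x hx
      rw [hx, RWS.g_add h𝔞 hβ hg (x.1 i) (m i)]
      ring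
    rw [integral_congr_ae hae2,
      integral_add ((hintφ.const_mul _)) ((hint2 i (hUT hi)).const_mul _),
      integral_const_mul, integral_const_mul]
  -- claim K4 : off-cylinder atoms
  have hclaimA : ∀ j ∈ T, j ∉ s → A j = exp (σ j) * E :=
    fun j hjT hjs => RWS.K4 h𝔞 hβ hg hσa hp T s hsT φ hdep C hbd j hjT hjs
  -- put the per-site evaluations together
  rw [Finset.sum_congr rfl (fun i hi => by
    rw [hsplit i hi, hclaim1 i hi, hclaim3 i hi, hclaim4 i hi])]
  -- final telescoping algebra
  set f : ℤ → ℝ := fun j => exp (-β) ^ (m j) * A j - exp (σ (j - 1)) * E with hf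
  have hf1 : ∀ i : ℤ, f (i + 1) = exp (-β) ^ (m (i + 1)) * A (i + 1) - exp (σ i) * E := by
    intro i
    rw [hf]
    simp [add_sub_cancel_right]
  have hfs : ∀ j ∈ T, j ∉ s → f j = 0 := by
    intro j hjT hjs
    rw [hf]
    simp only []
    rw [hclaimA j hjT hjs, hσexp j]
    ring
  have hkey : ∑ i ∈ U, f (i + 1) = ∑ i ∈ U, f i := by
    have him : ∑ i ∈ U, f (i + 1) = ∑ j ∈ U.image (fun j => j + 1), f j :=
      (Finset.sum_image (fun a _ b _ h => by omega)).symm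
    have h1 : ∑ j ∈ s, f j = ∑ j ∈ U.image (fun j => j + 1), f j :=
      Finset.sum_subset hsIm (fun x hx hxs => hfs x (hImT hx) hxs)
    have h2 : ∑ j ∈ s, f j = ∑ j ∈ U, f j :=
      Finset.sum_subset hsU (fun x hx hxs => hfs x (hUT hx) hxs)
    rw [him, ← h1, h2]
  have hexpand : ∀ i ∈ U,
      exp (-β) ^ (m (i + 1)) * A (i + 1) - A i
        + ((1 - exp (-β) ^ (m i)) * ((𝔞 - exp (σ i)) * D i)
            - (𝔞 * (1 - exp (-β) ^ (m i)) * E + (exp (-β) ^ (m i) - 1) * A i))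
      = (1 - exp (-β * m i)) * (𝔞 - exp (σ i)) * (D i - E) + (f (i + 1) - f i) := by
    intro i hi
    rw [hf1 i, hf, hqnat (m i)]
    simp only []
    rw [hσexp i]
    ring
  rw [Finset.sum_congr rfl hexpand, Finset.sum_add_distrib]
  have : ∑ i ∈ U, (f (i + 1) - f i) = 0 := by
    rw [Finset.sum_sub_distrib, hkey, sub_self]
  rw [this, add_zero]
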